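/- For 1 < β < 2, the Ortigueira coefficients ω_k^{(β)} = (-1)^k Γ(β+1) cos(βπ/2)/(Γ(β/2-k+1)Γ(β/2+k+1)) satisfy ω_0^{(β)} < 0 and ω_k^{(β)} > 0 for all k ≥ 1. -/
import Mathlib

open Real

/-- Ortigueira's centred-difference coefficients
`ω_k^{(β)} = (-1)^k Γ(β+1) cos(βπ/2) / (Γ(β/2 - k + 1) Γ(β/2 + k + 1))`. -/
noncomputable def ortW (β : ℝ) (k : ℕ) : ℝ :=
  (-1 : ℝ) ^ k * Real.Gamma (β + 1) * Real.cos (β * Real.pi / 2) /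
    (Real.Gamma (β / 2 - k + 1) * Real.Gamma (β / 2 + k + 1))

/-- For `1 < β < 2`: `ω_0 < 0` and `ω_k > 0` for all `k ≥ 1`. -/
theorem ortW_signs (β : ℝ) (hβ1 : 1 < β) (hβ2 : β < 2) :
    ortW β 0 < 0 ∧ ∀ k : ℕ, 1 ≤ k → 0 < ortW β k := by
  have hπ := Real.pi_pos
  have hcos : Real.cos (β * Real.pi / 2) < 0 := by
    apply Real.cos_neg_of_pi_div_two_lt_of_lt
    · nlinarith
    · nlinarith
  have hsin : 0 < Real.sin (Real.pi * β / 2) := by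
    apply Real.sin_pos_of_pos_of_lt_pi <;> nlinarith
  have hΓβ : 0 < Real.Gamma (β + 1) := Real.Gamma_pos_of_pos (by linarith)
  constructor
  · have h0 : 0 < Real.Gamma (β / 2 + 1) := Real.Gamma_pos_of_pos (by linarith)
    unfold ortW
    push_cast
    rw [pow_zero, one_mul]
    apply div_neg_of_neg_of_pos
    · exact mul_neg_of_pos_of_neg hΓβ hcos
    · rw [sub_zero, add_zero]; positivity
  · intro k hk
    set x : ℝ := β / 2 - k + 1 with hxdef
    have hΓy : 0 < Real.Gamma (β / 2 + k + 1) := by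
      apply Real.Gamma_pos_of_pos
      have : (0:ℝ) ≤ k := Nat.cast_nonneg k
      linarith
    have h1x : 0 < Real.Gamma (1 - x) := by
      apply Real.Gamma_pos_of_pos
      have : (1:ℝ) ≤ k := by exact_mod_cast hk
      simp only [hxdef]
      linarith
    -- reflection formula
    have hrefl := Real.Gamma_mul_Gamma_one_sub x
    have hsinx : Real.sin (Real.pi * x) = (-1) ^ (k + 1) * Real.sin (Real.pi * β / 2) := by
      have h : Real.pi * x = Real.pi * β / 2 + ((1 - k : ℤ) : ℝ) * Real.pi := by
        push_cast; ring
      rw [h, Real.sin_add_int_mul_pi]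
      congr 1
      have h2 : ((1:ℤ) - k) = (k + 1 : ℤ) - 2 * k := by ring
      rw [h2, zpow_sub₀ (by norm_num : (-1:ℝ) ≠ 0)]
      rw [show ((2:ℤ) * k) = ((2 * k : ℕ) : ℤ) by push_cast; ring,
        show ((k:ℤ) + 1) = ((k + 1 : ℕ) : ℤ) by push_cast; ring,
        zpow_natCast, zpow_natCast, pow_mul]
      norm_num
    have hΓx : Real.Gamma x = (-1) ^ (k + 1) * (Real.pi / (Real.sin (Real.pi * β / 2) * Real.Gamma (1 - x))) := by
      have h1 : Real.Gamma x = Real.pi / (Real.sin (Real.pi * x) * Real.Gamma (1 - x)) := by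
        rw [← div_div, eq_div_iff h1x.ne', hrefl]
      rw [h1, hsinx]
      rcases Nat.even_or_odd (k + 1) with he | ho
      · rw [he.neg_one_pow, one_mul, one_mul]
      · rw [ho.neg_one_pow, neg_one_mul, neg_mul, div_neg, neg_one_mul]
    unfold ortW
    rw [hΓx, pow_succ]
    have hcos' : 0 < -Real.cos (β * Real.pi / 2) := by linarith
    rcases Nat.even_or_odd k with he | ho
    · rw [he.neg_one_pow]
      rw [show (1:ℝ) * -1 * (Real.pi / (Real.sin (Real.pi * β / 2) * Real.Gamma (1 - x))) *
            Real.Gamma (β / 2 + k + 1) =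
          -(Real.pi / (Real.sin (Real.pi * β / 2) * Real.Gamma (1 - x)) *
            Real.Gamma (β / 2 + k + 1)) by ring, div_neg]
      rw [show (1:ℝ) * Real.Gamma (β + 1) * Real.cos (β * Real.pi / 2) =
          -(Real.Gamma (β + 1) * -Real.cos (β * Real.pi / 2)) by ring, neg_div, neg_neg]
      positivity
    · rw [ho.neg_one_pow]
      rw [show (-1:ℝ) * -1 * (Real.pi / (Real.sin (Real.pi * β / 2) * Real.Gamma (1 - x))) *
            Real.Gamma (β / 2 + k + 1) =
          Real.pi / (Real.sin (Real.pi * β / 2) * Real.Gamma (1 - x)) *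
            Real.Gamma (β / 2 + k + 1) by ring]
      rw [show (-1:ℝ) * Real.Gamma (β + 1) * Real.cos (β * Real.pi / 2) =
          Real.Gamma (β + 1) * -Real.cos (β * Real.pi / 2) by ring]
      positivity
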